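/- Let n ≥ 2 be an integer, β ∈ (0,1/2), and d > 1, and let p : (0,∞) × (0,∞) → [0,∞) be measurable with p(η,t) ≤ d g_n(η,t) for all η, t > 0. Then for every x̃ > 0, limsup_{t→∞} t^{2β−1} · log ( ∫_{{η > 0 : η ≥ x̃ t^{1−β} + (n−1)t}} p(η,t) dη ) ≤ −x̃²/4. -/

import Mathlib

open MeasureTheory Real Filter

/-- The Davies–Mandouvalos comparison function `g_n(η,t)` for the radial density of
hyperbolic Brownian motion on the `n`-dimensional Poincaré half-space. -/
noncomputable def hypg (n : ℕ) (η t : ℝ) : ℝ :=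
  t ^ (-(n : ℝ) / 2) * (η / (1 + η)) ^ (n - 1) *
    Real.exp (-(η - ((n : ℝ) - 1) * t) ^ 2 / (4 * t)) *
    (1 + η + t) ^ (((n : ℝ) - 3) / 2) * (1 + η)


open Set Topology


lemma lintegral_exp_tail (a : ℝ) {m : ℝ} (hm : 0 < m) (K : ℝ) (hK : 0 ≤ K) :
    ∫⁻ η in Set.Ici a, ENNReal.ofReal (K * Real.exp (-(m * (η - a)))) =
      ENNReal.ofReal (K / m) := by
  rw [setLIntegral_congr (Filter.EventuallyEq.symm Ioi_ae_eq_Ici)]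
  have hrw : ∀ η : ℝ, K * Real.exp (-(m * (η - a))) =
      (K * Real.exp (m * a)) * Real.exp (-(m * η)) := by
    intro η
    rw [mul_assoc, ← Real.exp_add]
    ring_nf
  simp_rw [hrw]
  have hint : IntegrableOn (fun η : ℝ => (K * Real.exp (m * a)) * Real.exp (-(m * η)))
      (Set.Ioi a) := by
    have := (exp_neg_integrableOn_Ioi a hm)
    simpa [neg_mul, IntegrableOn] using this.const_mul (K * Real.exp (m * a))
  rw [← ofReal_integral_eq_lintegral_ofReal hint]
  · congr 1
    rw [MeasureTheory.integral_const_mul]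
    have : (∫ η in Set.Ioi a, Real.exp (-(m * η))) = m⁻¹ * Real.exp (-(m * a)) := by
      have h := integral_comp_mul_left_Ioi (fun x => Real.exp (-x)) a hm
      simp only [smul_eq_mul] at h
      rw [h, integral_exp_neg_Ioi]
    rw [this]
    rw [show K * rexp (m * a) * (m⁻¹ * rexp (-(m * a))) =
      K * m⁻¹ * (rexp (m * a) * rexp (-(m * a))) by ring, ← Real.exp_add]
    simp [div_eq_mul_inv]
  · filter_upwards with η
    positivity

lemma hypg_le (n : ℕ) (hn : 2 ≤ n) {η t lam : ℝ} (ht : 1 ≤ t) (hη : 0 < η)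
    (hlam : 0 < lam) (hu : ((n : ℝ) - 1) * t ≤ η) :
    hypg n η t ≤ (1 + n * t) ^ n * (n.factorial : ℝ) * t ^ n * Real.exp (1 / t) *
      Real.exp (lam ^ 2 * t) *
      Real.exp (-((lam - 1 / t) * (η - ((n : ℝ) - 1) * t))) := by
  have ht0 : (0 : ℝ) < t := lt_of_lt_of_le one_pos ht
  set u : ℝ := η - ((n : ℝ) - 1) * t with hu_def
  have hu0 : 0 ≤ u := by simp [hu_def]; linarith
  have h1η : (0 : ℝ) < 1 + η := by linarith
  -- factor bounds
  have s1 : t ^ (-(n : ℝ) / 2) ≤ 1 := by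
    apply Real.rpow_le_one_of_one_le_of_nonpos ht
    have : (0:ℝ) ≤ (n:ℝ) := Nat.cast_nonneg n
    linarith
  have s2 : (η / (1 + η)) ^ (n - 1) ≤ 1 := by
    apply pow_le_one₀ (div_nonneg hη.le h1η.le)
    rw [div_le_one h1η]; linarith
  have s3 : Real.exp (-u ^ 2 / (4 * t)) ≤ Real.exp (lam ^ 2 * t) * Real.exp (-(lam * u)) := by
    rw [← Real.exp_add]
    apply Real.exp_le_exp.mpr
    rw [div_le_iff₀ (by linarith : (0:ℝ) < 4 * t)]
    nlinarith [sq_nonneg (u - 2 * lam * t)]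
  -- polynomial factor bound
  have hbase : (1 : ℝ) ≤ 1 + η + t := by linarith
  have s4a : (1 + η + t) ^ (((n : ℝ) - 3) / 2) ≤ (1 + η + t) ^ (n - 1 : ℕ) := by
    rw [← Real.rpow_natCast (1 + η + t) (n - 1)]
    apply Real.rpow_le_rpow_of_exponent_le hbase
    have : ((n - 1 : ℕ) : ℝ) = (n : ℝ) - 1 := by
      have : (1:ℕ) ≤ n := le_trans one_le_two hn
      push_cast [Nat.cast_sub this]; ring
    rw [this]
    have : (2:ℝ) ≤ (n:ℝ) := by exact_mod_cast hn
    linarith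
  have s4 : (1 + η + t) ^ (((n : ℝ) - 3) / 2) * (1 + η) ≤ (1 + n * t) ^ n * (1 + u) ^ n := by
    have h1 : (1 + η + t) ^ (((n : ℝ) - 3) / 2) * (1 + η) ≤
        (1 + η + t) ^ (n - 1 : ℕ) * (1 + η + t) := by
      apply mul_le_mul s4a (by linarith) h1η.le (by positivity)
    have h2 : (1 + η + t) ^ (n - 1 : ℕ) * (1 + η + t) = (1 + η + t) ^ n := by
      rw [← pow_succ]
      congr 1
      omega
    have h3 : 1 + η + t ≤ (1 + n * t) * (1 + u) := by
      have hnt : (0:ℝ) ≤ (n:ℝ) * t := by positivity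
      have : 1 + η + t = 1 + u + (n:ℝ) * t := by rw [hu_def]; ring
      rw [this]
      nlinarith
    calc (1 + η + t) ^ (((n : ℝ) - 3) / 2) * (1 + η)
        ≤ (1 + η + t) ^ n := by rw [← h2]; exact h1
      _ ≤ ((1 + n * t) * (1 + u)) ^ n := by
          apply pow_le_pow_left₀ (by linarith) h3
      _ = (1 + n * t) ^ n * (1 + u) ^ n := mul_pow _ _ _
  have s5 : (1 + u) ^ n ≤ (n.factorial : ℝ) * t ^ n * Real.exp ((1 + u) / t) := by
    have h := Real.pow_div_factorial_le_exp (x := (1 + u) / t) (by positivity) n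
    rw [div_pow, div_div] at h
    have hden : (0:ℝ) < t ^ n * (n.factorial : ℝ) := by positivity
    rw [div_le_iff₀ hden] at h
    calc (1 + u) ^ n ≤ Real.exp ((1 + u) / t) * (t ^ n * (n.factorial : ℝ)) := h
      _ = (n.factorial : ℝ) * t ^ n * Real.exp ((1 + u) / t) := by ring
  -- assemble
  have key : hypg n η t = t ^ (-(n : ℝ) / 2) * (η / (1 + η)) ^ (n - 1) *
      Real.exp (-u ^ 2 / (4 * t)) * ((1 + η + t) ^ (((n : ℝ) - 3) / 2) * (1 + η)) := by
    rw [hypg, hu_def]; ring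
  rw [key]
  have hpos1 : (0:ℝ) ≤ (1 + η + t) ^ (((n : ℝ) - 3) / 2) * (1 + η) := by positivity
  calc t ^ (-(n : ℝ) / 2) * (η / (1 + η)) ^ (n - 1) *
      Real.exp (-u ^ 2 / (4 * t)) * ((1 + η + t) ^ (((n : ℝ) - 3) / 2) * (1 + η))
      ≤ 1 * 1 * (Real.exp (lam ^ 2 * t) * Real.exp (-(lam * u))) *
        ((1 + n * t) ^ n * ((n.factorial : ℝ) * t ^ n * Real.exp ((1 + u) / t))) := by
        have hs45 : (1 + η + t) ^ (((n : ℝ) - 3) / 2) * (1 + η) ≤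
            (1 + n * t) ^ n * ((n.factorial : ℝ) * t ^ n * Real.exp ((1 + u) / t)) := by
          calc (1 + η + t) ^ (((n : ℝ) - 3) / 2) * (1 + η)
              ≤ (1 + n * t) ^ n * (1 + u) ^ n := s4
            _ ≤ (1 + n * t) ^ n * ((n.factorial : ℝ) * t ^ n * Real.exp ((1 + u) / t)) := by
                apply mul_le_mul_of_nonneg_left s5 (by positivity)
        gcongr
      _ = (1 + n * t) ^ n * (n.factorial : ℝ) * t ^ n * Real.exp (1 / t) *
          Real.exp (lam ^ 2 * t) *
          Real.exp (-((lam - 1 / t) * u)) := by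
        rw [show (1 + u) / t = 1 / t + u / t by ring, Real.exp_add]
        have hexp : Real.exp (-(lam * u)) * Real.exp (u / t) =
            Real.exp (-((lam - 1 / t) * u)) := by
          rw [← Real.exp_add]; congr 1; field_simp; ring
        rw [← hexp]; ring

/-- Upper-tail moderate deviation upper bound for the radial component of hyperbolic
Brownian motion: for every `x̃ > 0`,
`limsup_{t→∞} t^{2β-1} log P(t^{β-1}(D_n(t)-(n-1)t) ≥ x̃) ≤ -x̃²/4`. -/
theorem mdp_upper_bound_upper_tail (n : ℕ) (hn : 2 ≤ n) (β : ℝ) (hβ0 : 0 < β)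
    (hβ : β < 1 / 2) (d : ℝ) (hd : 1 < d)
    (p : ℝ → ℝ → ℝ) (hp : Measurable (Function.uncurry p))
    (hp_nonneg : ∀ η t : ℝ, 0 < η → 0 < t → 0 ≤ p η t)
    (hp_le : ∀ η t : ℝ, 0 < η → 0 < t → p η t ≤ d * hypg n η t)
    (xtil : ℝ) (hx : 0 < xtil) :
    Filter.limsup
        (fun t : ℝ => ((t ^ (2 * β - 1) : ℝ) : EReal) *
          ENNReal.log (∫⁻ η in {η : ℝ | 0 < η ∧ xtil * t ^ (1 - β) + ((n : ℝ) - 1) * t ≤ η},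
            ENNReal.ofReal (p η t)))
        Filter.atTop ≤
      ((-(xtil ^ 2 / 4) : ℝ) : EReal) := by
  have hd0 : (0 : ℝ) < d := lt_trans one_pos hd
  -- constant
  set C0 : ℝ := d * (1 + (n : ℝ)) ^ n * (n.factorial : ℝ) * Real.exp 1 * (4 / xtil) with hC0
  have hC0pos : 0 < C0 := by positivity
  -- the dominating real function
  set R : ℝ → ℝ := fun t => t ^ (2 * β - 1) * Real.log C0 +
      (2 * (n : ℝ) + 1) * (t ^ (2 * β - 1) * Real.log t) +
      (-(xtil ^ 2 / 4) + xtil * t ^ (β - 1)) with hR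
  -- Step 1: eventual bound
  have hev : ∀ᶠ t in atTop, (fun t : ℝ => ((t ^ (2 * β - 1) : ℝ) : EReal) *
          ENNReal.log (∫⁻ η in {η : ℝ | 0 < η ∧ xtil * t ^ (1 - β) + ((n : ℝ) - 1) * t ≤ η},
            ENNReal.ofReal (p η t))) t ≤ ((R t : ℝ) : EReal) := by
    have hsmall : Tendsto (fun t : ℝ => t ^ (β - 1)) atTop (𝓝 0) := by
      have h := tendsto_rpow_neg_atTop (by linarith : (0:ℝ) < 1 - β)
      refine h.congr fun x => ?_
      congr 1; ring
    filter_upwards [eventually_ge_atTop (1 : ℝ),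
      hsmall.eventually_le_const (by positivity : (0:ℝ) < xtil / 4)] with t ht hts
    have ht0 : (0 : ℝ) < t := lt_of_lt_of_le one_pos ht
    have hmul : ∀ a b : ℝ, t ^ a * t ^ b = t ^ (a + b) := fun a b =>
      (Real.rpow_add ht0 a b).symm
    set L : ℝ := xtil * t ^ (-β) / 2 with hL
    set M : ℝ := L - 1 / t with hM
    set A : ℝ := xtil * t ^ (1 - β) + ((n : ℝ) - 1) * t with hA
    have htneg : (0:ℝ) < t ^ (-β) := Real.rpow_pos_of_pos ht0 _
    have hLpos : 0 < L := by positivity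
    have h1t : 1 / t = t ^ (β - 1) * t ^ (-β) := by
      rw [hmul]
      rw [show β - 1 + -β = -1 by ring, Real.rpow_neg_one, one_div]
    have hML : L / 2 ≤ M := by
      have : 1 / t ≤ xtil / 4 * t ^ (-β) := by
        rw [h1t]
        exact mul_le_mul_of_nonneg_right hts htneg.le
      rw [hM, hL]; linarith
    have hMpos : 0 < M := lt_of_lt_of_le (by positivity) hML
    set B : ℝ := d * (1 + n * t) ^ n * (n.factorial : ℝ) * t ^ n * Real.exp (1 / t) *
      Real.exp (L ^ 2 * t) * Real.exp (-(M * (xtil * t ^ (1 - β)))) with hB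
    have hBpos : 0 < B := by positivity
    have hxt : (0:ℝ) < xtil * t ^ (1 - β) := by positivity
    -- Step 1a: integral bound
    have hI : (∫⁻ η in {η : ℝ | 0 < η ∧ A ≤ η}, ENNReal.ofReal (p η t)) ≤
        ENNReal.ofReal (B / M) := by
      have hpt : ∀ η ∈ {η : ℝ | 0 < η ∧ A ≤ η},
          ENNReal.ofReal (p η t) ≤ ENNReal.ofReal (B * Real.exp (-(M * (η - A)))) := by
        rintro η ⟨hη, hηA⟩
        apply ENNReal.ofReal_le_ofReal
        have hu : ((n : ℝ) - 1) * t ≤ η := by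
          have : ((n : ℝ) - 1) * t ≤ A := by rw [hA]; linarith
          linarith
        have step1 := hp_le η t hη ht0
        have step2 := hypg_le n hn ht hη hLpos hu
        have key : d * ((1 + n * t) ^ n * (n.factorial : ℝ) * t ^ n * Real.exp (1 / t) *
            Real.exp (L ^ 2 * t) *
            Real.exp (-((L - 1 / t) * (η - ((n : ℝ) - 1) * t)))) =
            B * Real.exp (-(M * (η - A))) := by
          rw [hB]
          rw [show -((L - 1/t) * (η - ((n:ℝ)-1)*t)) =
            -(M * (xtil * t ^ (1 - β))) + -(M * (η - A)) by rw [hM, hA]; ring]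
          rw [Real.exp_add]; ring
        calc p η t ≤ d * hypg n η t := step1
          _ ≤ d * ((1 + n * t) ^ n * (n.factorial : ℝ) * t ^ n * Real.exp (1 / t) *
              Real.exp (L ^ 2 * t) *
              Real.exp (-((L - 1 / t) * (η - ((n : ℝ) - 1) * t)))) :=
            mul_le_mul_of_nonneg_left step2 hd0.le
          _ = B * Real.exp (-(M * (η - A))) := key
      calc (∫⁻ η in {η : ℝ | 0 < η ∧ A ≤ η}, ENNReal.ofReal (p η t))
          ≤ ∫⁻ η in {η : ℝ | 0 < η ∧ A ≤ η},
              ENNReal.ofReal (B * Real.exp (-(M * (η - A)))) := by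
            apply setLIntegral_mono _ hpt
            apply Measurable.ennreal_ofReal
            fun_prop
        _ ≤ ∫⁻ η in Set.Ici A, ENNReal.ofReal (B * Real.exp (-(M * (η - A)))) := by
            apply lintegral_mono_set
            intro η hη
            exact hη.2
        _ = ENNReal.ofReal (B / M) := lintegral_exp_tail A hMpos B hBpos.le
    -- Step 1b: bound B / M
    have hBM : B / M ≤ C0 * t ^ (2 * n + 1) *
        Real.exp (L ^ 2 * t - M * (xtil * t ^ (1 - β))) := by
      have hsplit : B / M = d * (1 + n * t) ^ n * (n.factorial : ℝ) * t ^ n *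
          Real.exp (1 / t) * M⁻¹ *
          Real.exp (L ^ 2 * t - M * (xtil * t ^ (1 - β))) := by
        rw [hB, Real.exp_sub, Real.exp_neg, div_eq_mul_inv]
        ring
      rw [hsplit]
      have hMinv : M⁻¹ ≤ 4 * t / xtil := by
        have hlow : xtil / (4 * t) ≤ M := by
          have h2 : t ^ (-(1:ℝ)) ≤ t ^ (-β) :=
            Real.rpow_le_rpow_of_exponent_le ht (by linarith)
          rw [Real.rpow_neg_one] at h2
          have h3 : 1 / t ≤ t ^ (-β) := by rw [one_div]; exact h2
          have : xtil / (4 * t) ≤ L / 2 := by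
            calc xtil / (4 * t) = xtil / 4 * (1 / t) := by ring
              _ ≤ xtil / 4 * t ^ (-β) :=
                mul_le_mul_of_nonneg_left h3 (by positivity)
              _ = L / 2 := by rw [hL]; ring
          linarith [hML]
        calc M⁻¹ ≤ (xtil / (4 * t))⁻¹ :=
              inv_anti₀ (by positivity) hlow
          _ = 4 * t / xtil := by rw [inv_div]
      have hfac1 : (1 + n * t) ^ n ≤ (1 + (n:ℝ)) ^ n * t ^ n := by
        rw [← mul_pow]
        apply pow_le_pow_left₀ (by positivity)
        nlinarith [Nat.cast_nonneg (α := ℝ) n]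
      have hfac2 : Real.exp (1 / t) ≤ Real.exp 1 :=
        Real.exp_le_exp.mpr (by rw [div_le_one ht0]; exact ht)
      have hchain : d * (1 + n * t) ^ n * (n.factorial : ℝ) * t ^ n *
          Real.exp (1 / t) * M⁻¹ ≤ C0 * t ^ (2 * n + 1) := by
        calc d * (1 + n * t) ^ n * (n.factorial : ℝ) * t ^ n * Real.exp (1 / t) * M⁻¹
            ≤ d * ((1 + (n:ℝ)) ^ n * t ^ n) * (n.factorial : ℝ) * t ^ n *
              Real.exp 1 * (4 * t / xtil) := by
              have hMinv0 : (0:ℝ) ≤ M⁻¹ := by positivity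
              gcongr
          _ = C0 * t ^ (2 * n + 1) := by
              rw [hC0]
              rw [show 2 * n + 1 = n + n + 1 by ring]
              rw [pow_add, pow_add, pow_one]
              field_simp
      exact mul_le_mul_of_nonneg_right hchain (Real.exp_nonneg _) |>.trans_eq rfl
    have hBMpos : 0 < B / M := by positivity
    -- Step 1c: log bound and G computation
    have hGval : L ^ 2 * t - M * (xtil * t ^ (1 - β)) =
        -(xtil ^ 2 / 4) * t ^ (1 - 2 * β) + xtil * t ^ (-β) := by
      have e1 : t ^ (-β) * t ^ (-β) * t = t ^ (1 - 2 * β) := by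
        rw [hmul]
        nth_rewrite 2 [← Real.rpow_one t]
        rw [hmul]; congr 1; ring
      have e2 : t ^ (-β) * t ^ (1 - β) = t ^ (1 - 2 * β) := by
        rw [hmul]; congr 1; ring
      have e3 : t ^ (1 - β) * (1 / t) = t ^ (-β) := by
        rw [one_div, ← Real.rpow_neg_one t, hmul]; congr 1; ring
      calc L ^ 2 * t - M * (xtil * t ^ (1 - β))
          = xtil ^ 2 / 4 * (t ^ (-β) * t ^ (-β) * t) -
            xtil ^ 2 / 2 * (t ^ (-β) * t ^ (1 - β)) +
            xtil * (t ^ (1 - β) * (1 / t)) := by rw [hL, hM]; ring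
        _ = -(xtil ^ 2 / 4) * t ^ (1 - 2 * β) + xtil * t ^ (-β) := by
            rw [e1, e2, e3]; ring
    have hlog : Real.log (B / M) ≤ Real.log C0 + (2 * (n:ℝ) + 1) * Real.log t +
        (-(xtil ^ 2 / 4) * t ^ (1 - 2 * β) + xtil * t ^ (-β)) := by
      calc Real.log (B / M) ≤ Real.log (C0 * t ^ (2 * n + 1) *
            Real.exp (L ^ 2 * t - M * (xtil * t ^ (1 - β)))) :=
            Real.log_le_log hBMpos hBM
        _ = Real.log C0 + (2 * (n:ℝ) + 1) * Real.log t +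
            (-(xtil ^ 2 / 4) * t ^ (1 - 2 * β) + xtil * t ^ (-β)) := by
            rw [Real.log_mul (by positivity) (Real.exp_ne_zero _),
              Real.log_mul (by positivity) (by positivity), Real.log_exp,
              Real.log_pow, hGval]
            push_cast
            ring
    -- Step 1d: multiply by t^(2β-1) and pass to EReal
    have hcpos : (0:ℝ) < t ^ (2 * β - 1) := Real.rpow_pos_of_pos ht0 _
    have hfinal : t ^ (2 * β - 1) * Real.log (B / M) ≤ R t := by
      have h1 : t ^ (2 * β - 1) * Real.log (B / M) ≤
          t ^ (2 * β - 1) * (Real.log C0 + (2 * (n:ℝ) + 1) * Real.log t +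
          (-(xtil ^ 2 / 4) * t ^ (1 - 2 * β) + xtil * t ^ (-β))) :=
        mul_le_mul_of_nonneg_left hlog hcpos.le
      have e4 : t ^ (2 * β - 1) * t ^ (1 - 2 * β) = 1 := by
        rw [hmul, show 2 * β - 1 + (1 - 2 * β) = 0 by ring, Real.rpow_zero]
      have e5 : t ^ (2 * β - 1) * t ^ (-β) = t ^ (β - 1) := by
        rw [hmul]; congr 1; ring
      calc t ^ (2 * β - 1) * Real.log (B / M)
          ≤ t ^ (2 * β - 1) * (Real.log C0 + (2 * (n:ℝ) + 1) * Real.log t +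
            (-(xtil ^ 2 / 4) * t ^ (1 - 2 * β) + xtil * t ^ (-β))) := h1
        _ = t ^ (2 * β - 1) * Real.log C0 +
            (2 * (n : ℝ) + 1) * (t ^ (2 * β - 1) * Real.log t) +
            (-(xtil ^ 2 / 4) * (t ^ (2 * β - 1) * t ^ (1 - 2 * β)) +
             xtil * (t ^ (2 * β - 1) * t ^ (-β))) := by ring
        _ = R t := by rw [e4, e5, hR]; ring
    -- put it together in EReal
    show ((t ^ (2 * β - 1) : ℝ) : EReal) * ENNReal.log _ ≤ ((R t : ℝ) : EReal)
    calc ((t ^ (2 * β - 1) : ℝ) : EReal) *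
        ENNReal.log (∫⁻ η in {η : ℝ | 0 < η ∧ A ≤ η}, ENNReal.ofReal (p η t))
        ≤ ((t ^ (2 * β - 1) : ℝ) : EReal) * ((Real.log (B / M) : ℝ) : EReal) := by
          apply mul_le_mul_of_nonneg_left _ (EReal.coe_nonneg.mpr hcpos.le)
          calc ENNReal.log (∫⁻ η in {η : ℝ | 0 < η ∧ A ≤ η}, ENNReal.ofReal (p η t))
              ≤ ENNReal.log (ENNReal.ofReal (B / M)) := ENNReal.log_le_log_iff.mpr hI
            _ = ((Real.log (B / M) : ℝ) : EReal) := ENNReal.log_ofReal_of_pos hBMpos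
      _ = ((t ^ (2 * β - 1) * Real.log (B / M) : ℝ) : EReal) := by
          rw [EReal.coe_mul]
      _ ≤ ((R t : ℝ) : EReal) := EReal.coe_le_coe_iff.mpr hfinal
  -- Step 2: Tendsto R
  have hT : Tendsto R atTop (𝓝 (-(xtil ^ 2 / 4))) := by
    have T1 : Tendsto (fun t : ℝ => t ^ (2 * β - 1) * Real.log C0) atTop (𝓝 0) := by
      have h := tendsto_rpow_neg_atTop (by linarith : (0:ℝ) < 1 - 2 * β)
      have h' : Tendsto (fun t : ℝ => t ^ (2 * β - 1)) atTop (𝓝 0) := by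
        refine h.congr fun x => ?_
        congr 1; ring
      simpa using h'.mul_const (Real.log C0)
    have T2 : Tendsto (fun t : ℝ => (2 * (n:ℝ) + 1) * (t ^ (2 * β - 1) * Real.log t))
        atTop (𝓝 0) := by
      have h := (isLittleO_log_rpow_atTop (by linarith : (0:ℝ) < 1 - 2 * β)).tendsto_div_nhds_zero
      have h' : Tendsto (fun t : ℝ => t ^ (2 * β - 1) * Real.log t) atTop (𝓝 0) := by
        apply h.congr'
        filter_upwards [eventually_gt_atTop (0:ℝ)] with t ht0
        rw [div_eq_mul_inv, ← Real.rpow_neg ht0.le, mul_comm]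
        congr 2
        ring
      simpa using h'.const_mul (2 * (n:ℝ) + 1)
    have T3 : Tendsto (fun t : ℝ => -(xtil ^ 2 / 4) + xtil * t ^ (β - 1)) atTop
        (𝓝 (-(xtil ^ 2 / 4))) := by
      have h := tendsto_rpow_neg_atTop (by linarith : (0:ℝ) < 1 - β)
      have h' : Tendsto (fun t : ℝ => t ^ (β - 1)) atTop (𝓝 0) := by
        refine h.congr fun x => ?_
        congr 1; ring
      have := (h'.const_mul xtil).const_add (-(xtil ^ 2 / 4))
      simpa using this
    have := (T1.add T2).add T3
    simpa [hR] using this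
  -- Step 3: conclude
  calc Filter.limsup _ atTop ≤ Filter.limsup (fun t : ℝ => ((R t : ℝ) : EReal)) atTop :=
        Filter.limsup_le_limsup hev
    _ = ((-(xtil ^ 2 / 4) : ℝ) : EReal) := (EReal.tendsto_coe.mpr hT).limsup_eq
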